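/- Let λ₁, λ₂ > 0 and ν > 0. A vector ξ ∈ ℝ^d can be written as ξ = x + y with ‖x‖₂ ≤ λ₂ν and ‖y‖_∞ ≤ λ₁ν if and only if ‖S_{λ₁ν}(ξ)‖₂² ≤ (λ₂ν)², where S_β is the coordinatewise soft-thresholding operator. -/

import Mathlib

/-- Soft-thresholding: `S_β(ξ)_i = sign(ξ_i) · max(|ξ_i| - β, 0)`. -/
noncomputable def softThreshold (d : ℕ) (β : ℝ) (ξ : EuclideanSpace ℝ (Fin d)) :
    EuclideanSpace ℝ (Fin d) := WithLp.toLp 2 (fun i => Real.sign (ξ i) * max (|ξ i| - β) 0)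

lemma abs_soft (β t : ℝ) (hβ : 0 ≤ β) :
    |Real.sign t * max (|t| - β) 0| = max (|t| - β) 0 := by
  rcases lt_trichotomy t 0 with h | h | h
  · rw [Real.sign_of_neg h, abs_mul, abs_neg, abs_one, one_mul,
      abs_of_nonneg (le_max_right _ _)]
  · subst h
    simp [max_eq_right (by simpa using hβ : |(0:ℝ)| - β ≤ 0), hβ]
  · rw [Real.sign_of_pos h, abs_mul, abs_one, one_mul,
      abs_of_nonneg (le_max_right _ _)]

theorem stmt_3 (d : ℕ) (lam1 lam2 ν : ℝ) (h1 : 0 < lam1) (h2 : 0 < lam2) (hν : 0 < ν)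
    (ξ : EuclideanSpace ℝ (Fin d)) :
    (∃ x y : EuclideanSpace ℝ (Fin d),
        ξ = x + y ∧ ‖x‖ ≤ lam2 * ν ∧ ∀ i, |y i| ≤ lam1 * ν) ↔
      ‖softThreshold d (lam1 * ν) ξ‖ ^ 2 ≤ (lam2 * ν) ^ 2 := by
  have hβ : 0 ≤ lam1 * ν := by positivity
  have hc : 0 < lam2 * ν := by positivity
  constructor
  · rintro ⟨x, y, rfl, hx, hy⟩
    have hnorm : ‖softThreshold d (lam1 * ν) (x + y)‖ ≤ ‖x‖ := by
      rw [EuclideanSpace.norm_eq, EuclideanSpace.norm_eq]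
      apply Real.sqrt_le_sqrt
      apply Finset.sum_le_sum
      intro i _
      have h1i : ‖softThreshold d (lam1 * ν) (x + y) i‖ = max (|(x + y) i| - lam1 * ν) 0 := by
        rw [Real.norm_eq_abs]; exact abs_soft (lam1 * ν) ((x + y) i) hβ
      have h2i : ‖softThreshold d (lam1 * ν) (x + y) i‖ ≤ ‖x i‖ := by
        rw [h1i]
        apply max_le
        · have := abs_add_le (x i) (y i)
          have := hy i
          simp only [Real.norm_eq_abs]
          have hxy : (x + y) i = x i + y i := rfl
          rw [hxy]
          linarith [abs_add_le (x i) (y i), hy i]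
        · exact norm_nonneg _
      exact pow_le_pow_left₀ (norm_nonneg _) h2i 2
    have := hnorm.trans hx
    nlinarith [norm_nonneg (softThreshold d (lam1 * ν) (x + y))]
  · intro h
    refine ⟨softThreshold d (lam1 * ν) ξ, ξ - softThreshold d (lam1 * ν) ξ, by abel, ?_, ?_⟩
    · nlinarith [norm_nonneg (softThreshold d (lam1 * ν) ξ)]
    · intro i
      have hyi : (ξ - softThreshold d (lam1 * ν) ξ) i
          = ξ i - Real.sign (ξ i) * max (|ξ i| - lam1 * ν) 0 := rfl
      rw [hyi]
      rcases le_total (|ξ i|) (lam1 * ν) with hle | hle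
      · rw [max_eq_right (by linarith)]
        simpa using hle
      · rw [max_eq_left (by linarith)]
        have hne : ξ i ≠ 0 := by
          intro h0
          rw [h0] at hle
          simp at hle
          have : 0 < lam1 * ν := by positivity
          linarith
        have hsign : Real.sign (ξ i) * |ξ i| = ξ i := by
          rcases lt_trichotomy (ξ i) 0 with h' | h' | h'
          · rw [Real.sign_of_neg h', abs_of_neg h']; ring
          · exact absurd h' hne
          · rw [Real.sign_of_pos h', abs_of_pos h']; ring
        have : ξ i - Real.sign (ξ i) * (|ξ i| - lam1 * ν)
            = Real.sign (ξ i) * (lam1 * ν) := by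
          nlinarith [hsign]
        rw [this, abs_mul, abs_of_nonneg hβ]
        rcases lt_trichotomy (ξ i) 0 with h' | h' | h'
        · rw [Real.sign_of_neg h']; simp
        · exact absurd h' hne
        · rw [Real.sign_of_pos h']; simp
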